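/- Let d ≥ 2 and N ≥ 1 be integers with d = N + 1 and d prime, let ζ ∈ ℂ be a primitive M̄-th root of unity (M̄ := |∑_{l=0}^{N}(1−d)^l|), and let k be an integer not divisible by M̄. Suppose v : Fin (N+1) → ℂ is not identically zero and there exists λ ∈ ℂ such that ζ^{k·u_i} · v_i = λ · v_i for every i ∈ Fin (N+1) (integer powers of the unit ζ, with u_0 = 0). Then there exists an index i₀ such that v_j = 0 for all j ≠ i₀; that is, the fixed locus in ℙ^N of every nonzero element of the ℤ/M̄ℤ-action consists exactly of the N+1 coordinate points. -/

import Mathlib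

open Finset

private lemma geom_aux (d m : ℕ) :
    (d : ℤ) * ∑ l ∈ range m, (1 - (d : ℤ)) ^ l = 1 - (1 - (d : ℤ)) ^ m := by
  have h := geom_sum_mul (1 - (d : ℤ)) m
  linear_combination -h

private lemma um_mod_d (d m : ℕ) :
    ((∑ l ∈ range m, (1 - (d : ℤ)) ^ l : ℤ) : ZMod d) = (m : ZMod d) := by
  push_cast
  simp [ZMod.natCast_self]

private lemma coprime_um (d N : ℕ) (hdN : d = N + 1) (hp : Nat.Prime d)
    (m : ℕ) (hm1 : 1 ≤ m) (hm2 : m ≤ N) :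
    IsCoprime (∑ l ∈ range (N + 1), (1 - (d : ℤ)) ^ l)
      (∑ l ∈ range m, (1 - (d : ℤ)) ^ l) := by
  set A : ℤ := ∑ l ∈ range (N + 1), (1 - (d : ℤ)) ^ l with hA
  set B : ℤ := ∑ l ∈ range m, (1 - (d : ℤ)) ^ l with hB
  have hdm : ¬ (d ∣ m) := Nat.not_dvd_of_pos_of_lt hm1 (by omega)
  have hBd : ((B : ZMod d)) = (m : ZMod d) := um_mod_d d m
  have hBne : B ≠ 0 := by
    intro h
    rw [h] at hBd
    have : (m : ZMod d) = 0 := by simpa using hBd.symm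
    exact hdm ((ZMod.natCast_eq_zero_iff m d).mp this)
  rw [Int.isCoprime_iff_gcd_eq_one]
  by_contra hg
  have hg0 : Int.gcd A B ≠ 0 := by
    intro h
    exact hBne (Int.gcd_eq_zero_iff.mp h).2
  obtain ⟨q, hq, hqg⟩ := Nat.exists_prime_and_dvd hg
  have hqA : (q : ℤ) ∣ A := dvd_trans (Int.natCast_dvd_natCast.mpr hqg) (Int.gcd_dvd_left _ _)
  have hqB : (q : ℤ) ∣ B := dvd_trans (Int.natCast_dvd_natCast.mpr hqg) (Int.gcd_dvd_right _ _)
  haveI : Fact (Nat.Prime q) := ⟨hq⟩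
  have hA0 : ((A : ZMod q)) = 0 := (ZMod.intCast_zmod_eq_zero_iff_dvd A q).mpr hqA
  have hB0 : ((B : ZMod q)) = 0 := (ZMod.intCast_zmod_eq_zero_iff_dvd B q).mpr hqB
  set x : ZMod q := 1 - (d : ZMod q) with hx
  have hxm : x ^ m = 1 := by
    have h1 := geom_aux d m
    have h2 : (((d : ℤ) * B : ℤ) : ZMod q) = ((1 - (1 - (d : ℤ)) ^ m : ℤ) : ZMod q) := by
      rw [← hB] at h1; rw [h1]
    push_cast at h2
    rw [hB0, mul_zero] at h2
    rw [hx]; linear_combination h2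
  have hxd : x ^ d = 1 := by
    have h1 := geom_aux d (N + 1)
    have h2 : (((d : ℤ) * A : ℤ) : ZMod q)
        = ((1 - (1 - (d : ℤ)) ^ (N + 1) : ℤ) : ZMod q) := by
      rw [← hA] at h1; rw [h1]
    push_cast at h2
    rw [hA0, mul_zero] at h2
    rw [hdN, hx]; linear_combination h2
  have hcop : Nat.Coprime d m := (Nat.Prime.coprime_iff_not_dvd hp).mpr hdm
  have hord : orderOf x ∣ Nat.gcd m d :=
    Nat.dvd_gcd (orderOf_dvd_of_pow_eq_one hxm) (orderOf_dvd_of_pow_eq_one hxd)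
  have hord1 : orderOf x = 1 := by
    have hg1 : Nat.gcd m d = 1 := Nat.Coprime.gcd_eq_one (Nat.Coprime.symm hcop)
    exact Nat.eq_one_of_dvd_one (hg1 ▸ hord)
  have hx1 : x = 1 := orderOf_eq_one_iff.mp hord1
  have hdq : (d : ZMod q) = 0 := by
    rw [hx] at hx1
    linear_combination -hx1
  have hqd : q ∣ d := (ZMod.natCast_eq_zero_iff d q).mp hdq
  have hqed : q = d := (Nat.prime_dvd_prime_iff_eq hq hp).mp hqd
  subst hqed
  rw [hBd] at hB0
  exact hdm ((ZMod.natCast_eq_zero_iff m q).mp hB0)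

private lemma u_sub (d : ℕ) {j i : ℕ} (h : j ≤ i) :
    (∑ l ∈ range i, (1 - (d : ℤ)) ^ l) - (∑ l ∈ range j, (1 - (d : ℤ)) ^ l)
      = (1 - (d : ℤ)) ^ j * ∑ l ∈ range (i - j), (1 - (d : ℤ)) ^ l := by
  rw [← Finset.sum_Ico_eq_sub _ h, Finset.sum_Ico_eq_sum_range, Finset.mul_sum]
  exact Finset.sum_congr rfl fun l _ => by rw [← pow_add, add_comm]

/-- For `d = N + 1` prime, `ζ` a primitive `M̄`-th root of unity and `k` not divisible by `M̄`,
any nonzero eigenvector of the diagonal map with entries `ζ^{k·u_i}` is supported at a single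
coordinate: the fixed locus of every nonzero group element in `ℙ^N` consists of the coordinate
points. -/
theorem fixed_locus_is_coordinate_points (d N : ℕ) (hd : 2 ≤ d) (hN : 1 ≤ N)
    (hdN : d = N + 1) (hp : Nat.Prime d) (ζ : ℂ)
    (hζ : IsPrimitiveRoot ζ (∑ l ∈ Finset.range (N + 1), (1 - (d : ℤ)) ^ l).natAbs)
    (k : ℤ)
    (hk : ¬ (((∑ l ∈ Finset.range (N + 1), (1 - (d : ℤ)) ^ l).natAbs : ℤ) ∣ k))
    (v : Fin (N + 1) → ℂ) (hv : v ≠ 0) (lam : ℂ)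
    (hfix : ∀ i : Fin (N + 1),
      ζ ^ (k * ∑ l ∈ Finset.range (i : ℕ), (1 - (d : ℤ)) ^ l) * v i = lam * v i) :
    ∃ i₀ : Fin (N + 1), ∀ j : Fin (N + 1), j ≠ i₀ → v j = 0 := by
  set A : ℤ := ∑ l ∈ range (N + 1), (1 - (d : ℤ)) ^ l with hA
  set u : ℕ → ℤ := fun m => ∑ l ∈ range m, (1 - (d : ℤ)) ^ l with hu
  have hcop1 : IsCoprime A (1 - (d : ℤ)) := by
    refine ⟨(d : ℤ), (1 - (d : ℤ)) ^ N, ?_⟩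
    have h1 := geom_aux d (N + 1)
    rw [← hA] at h1
    have : (1 - (d : ℤ)) ^ (N + 1) = (1 - (d : ℤ)) ^ N * (1 - (d : ℤ)) := by ring
    linarith [h1, this ▸ h1]
  have key : ∀ i j : ℕ, j < i → i ≤ N → ¬ ((A : ℤ) ∣ k * (u i - u j)) := by
    intro i j hji hiN hdvd
    have hsub : u i - u j = (1 - (d : ℤ)) ^ j * u (i - j) := u_sub d hji.le
    rw [hsub] at hdvd
    have hc2 : IsCoprime A (u (i - j)) :=
      coprime_um d N hdN hp (i - j) (by omega) (by omega)
    have hc : IsCoprime A ((1 - (d : ℤ)) ^ j * u (i - j)) :=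
      (hcop1.pow_right).mul_right hc2
    have hAk : A ∣ k := hc.dvd_of_dvd_mul_right hdvd
    exact hk ((Int.natAbs_dvd).mpr hAk)
  have hex : ∃ i₀, v i₀ ≠ 0 := by
    by_contra h
    push_neg at h
    exact hv (funext fun i => h i)
  obtain ⟨i₀, hi₀⟩ := hex
  refine ⟨i₀, fun j hj => ?_⟩
  by_contra hvj
  set a : ℤ := k * u (i₀ : ℕ) with ha
  set b : ℤ := k * u (j : ℕ) with hb
  have e1 : ζ ^ a = lam := mul_right_cancel₀ hi₀ (hfix i₀)
  have e2 : ζ ^ b = lam := mul_right_cancel₀ hvj (hfix j)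
  have hvalne : (j : ℕ) ≠ (i₀ : ℕ) := fun h => hj (Fin.ext h)
  have hab : ¬ (((A.natAbs : ℤ)) ∣ (a - b)) := by
    rw [Int.natAbs_dvd]
    rcases lt_or_gt_of_ne hvalne with h | h
    · have := key (i₀ : ℕ) (j : ℕ) h (by omega)
      rwa [mul_sub, ← ha, ← hb] at this
    · intro hc
      apply key (j : ℕ) (i₀ : ℕ) h (by omega)
      rw [mul_sub, ← hb, ← ha]
      have h2 := dvd_neg.mpr hc
      rwa [neg_sub] at h2
  by_cases hζ0 : ζ = 0
  · -- degenerate case: then A.natAbs = 0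
    have hM0 : A.natAbs = 0 := by
      by_contra hM
      have := hζ.pow_eq_one
      rw [hζ0, zero_pow hM] at this
      exact zero_ne_one this
    have hA0 : A = 0 := Int.natAbs_eq_zero.mp hM0
    -- then (1-d)^(N+1) = 1, forcing d = 2, N = 1
    have h1 : (1 - (d : ℤ)) ^ (N + 1) = 1 := by
      have := geom_aux d (N + 1)
      rw [← hA, hA0, mul_zero] at this
      linarith
    have hN1 : N = 1 := by
      have h2 : ((1 - (d : ℤ)) ^ (N + 1)).natAbs = 1 := by rw [h1]; rfl
      rw [Int.natAbs_pow] at h2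
      have h3 : (1 - (d : ℤ)).natAbs = 1 :=
        (pow_eq_one_iff.mp h2).resolve_right (Nat.succ_ne_zero N)
      omega
    have hu0 : u 0 = 0 := by simp [hu]
    have hne : a - b ≠ 0 := by
      intro h
      apply hab
      rw [hM0, h]
      exact dvd_refl 0
    have hcase : (i₀ : ℕ) = 0 ∨ (j : ℕ) = 0 := by
      have h1 := i₀.isLt
      have h2 := j.isLt
      omega
    rcases hcase with h | h
    · have ha0 : a = 0 := by rw [ha, h, hu0, mul_zero]
      have hb0 : b ≠ 0 := by intro hb0; rw [ha0, hb0] at hne; exact hne rfl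
      rw [ha0, zpow_zero] at e1
      rw [hζ0, zero_zpow b hb0] at e2
      exact one_ne_zero (e1.trans e2.symm)
    · have hb0 : b = 0 := by rw [hb, h, hu0, mul_zero]
      have ha0 : a ≠ 0 := by intro ha0; rw [ha0, hb0] at hne; exact hne rfl
      rw [hb0, zpow_zero] at e2
      rw [hζ0, zero_zpow a ha0] at e1
      exact one_ne_zero (e2.trans e1.symm)
  · have hlam0 : lam ≠ 0 := by
      rw [← e1]; exact zpow_ne_zero a hζ0
    have e3 : ζ ^ (a - b) = 1 := by
      rw [zpow_sub₀ hζ0, e1, e2, div_self hlam0]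
    exact hab ((hζ.zpow_eq_one_iff_dvd (a - b)).mp e3)
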